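/- Suppose ‖x_i‖_1 ≤ R for all i ∈ {1,…,n}, where R > 0, and that n = m·b for integers m ≥ 1 and b ≥ 1. Then for every subset B ⊆ {1,…,n} with |B| = b and every W ∈ ℝ^{k×d}, the mini-batch gradient noise satisfies ‖(1/b)∑_{i∈B} g_i(W) − D(W)‖_1 ≤ 2(m−1) R · G(W). -/
import Mathlib


open Finset Filter

/-- Softmax map on `ℝ^k`. -/
noncomputable def softmax {k : ℕ} (z : Fin k → ℝ) (c : Fin k) : ℝ :=
  Real.exp (z c) / ∑ j, Real.exp (z j)

/-- Logits `W x` of a linear classifier `W : ℝ^{k×d}` on input `x : ℝ^d`. -/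
noncomputable def logits {k d : ℕ} (W : Fin k → Fin d → ℝ) (x : Fin d → ℝ) : Fin k → ℝ :=
  fun c => ∑ j, W c j * x j

/-- Cross-entropy loss `L(W) = -(1/n) ∑ᵢ log S_{yᵢ}(W xᵢ)`. -/
noncomputable def lossCE {n k d : ℕ} (x : Fin n → Fin d → ℝ) (y : Fin n → Fin k)
    (W : Fin k → Fin d → ℝ) : ℝ :=
  -((1 : ℝ) / n) * ∑ i, Real.log (softmax (logits W (x i)) (y i))

/-- Proxy function `G(W) = (1/n) ∑ᵢ (1 - S_{yᵢ}(W xᵢ))`. -/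
noncomputable def proxyG {n k d : ℕ} (x : Fin n → Fin d → ℝ) (y : Fin n → Fin k)
    (W : Fin k → Fin d → ℝ) : ℝ :=
  ((1 : ℝ) / n) * ∑ i, (1 - softmax (logits W (x i)) (y i))

/-- Per-sample gradient matrix `gᵢ(W) = (S(W xᵢ) - e_{yᵢ}) xᵢᵀ`. -/
noncomputable def sampleGrad {k d : ℕ} (x : Fin d → ℝ) (y : Fin k)
    (W : Fin k → Fin d → ℝ) : Fin k → Fin d → ℝ :=
  fun c j => (softmax (logits W x) c - (if c = y then 1 else 0)) * x j

/-- Full gradient matrix `D(W) = (1/n) ∑ᵢ gᵢ(W)`. -/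
noncomputable def gradCE {n k d : ℕ} (x : Fin n → Fin d → ℝ) (y : Fin n → Fin k)
    (W : Fin k → Fin d → ℝ) : Fin k → Fin d → ℝ :=
  fun c j => ((1 : ℝ) / n) * ∑ i, sampleGrad (x i) (y i) W c j

/-- Entry-wise 1-norm of a matrix. -/
noncomputable def norm1M {k d : ℕ} (A : Fin k → Fin d → ℝ) : ℝ :=
  ∑ c, ∑ j, |A c j|

/-- 1-norm of a vector. -/
noncomputable def norm1V {d : ℕ} (v : Fin d → ℝ) : ℝ := ∑ j, |v j|

/-- `min_{c ≠ y} (e_y - e_c)ᵀ A x`. -/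
noncomputable def marginMin {k d : ℕ} (hk : 2 ≤ k) (A : Fin k → Fin d → ℝ)
    (x : Fin d → ℝ) (y : Fin k) : ℝ :=
  (Finset.univ.erase y).inf'
    (by
      obtain ⟨cne, hcne⟩ := Fintype.exists_ne_of_one_lt_card
        (by simpa using (by omega : 1 < k)) y
      exact ⟨cne, Finset.mem_erase.mpr ⟨hcne, Finset.mem_univ _⟩⟩)
    (fun c => logits A x y - logits A x c)

/-- `min_{i ∈ [n], c ≠ yᵢ} (e_{yᵢ} - e_c)ᵀ W xᵢ`. -/
noncomputable def dataMargin {n k d : ℕ} (hn : 1 ≤ n) (hk : 2 ≤ k)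
    (x : Fin n → Fin d → ℝ) (y : Fin n → Fin k) (W : Fin k → Fin d → ℝ) : ℝ :=
  Finset.univ.inf' ⟨⟨0, by omega⟩, Finset.mem_univ _⟩
    (fun i => marginMin hk W (x i) (y i))

/-- Max margin `γ` over the max-norm unit ball. -/
noncomputable def gammaMax {n k d : ℕ} (hn : 1 ≤ n) (hk : 2 ≤ k)
    (x : Fin n → Fin d → ℝ) (y : Fin n → Fin k) : ℝ :=
  sSup { g : ℝ | ∃ W' : Fin k → Fin d → ℝ, ‖W'‖ ≤ 1 ∧ g = dataMargin hn hk x y W' }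

/-- Mini-batch gradient `(1/b) ∑_{i ∈ B} gᵢ(W)`. -/
noncomputable def batchGrad {n k d : ℕ} (x : Fin n → Fin d → ℝ) (y : Fin n → Fin k)
    (B : Finset (Fin n)) (b : ℕ) (W : Fin k → Fin d → ℝ) : Fin k → Fin d → ℝ :=
  fun c j => ((1 : ℝ) / b) * ∑ i ∈ B, sampleGrad (x i) (y i) W c j

/-- Frobenius norm of a matrix. -/
noncomputable def frobNorm {k d : ℕ} (A : Fin k → Fin d → ℝ) : ℝ :=
  Real.sqrt (∑ c, ∑ j, (A c j) ^ 2)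
lemma softmax_nonneg' {k : ℕ} (z : Fin k → ℝ) (y c : Fin k) : 0 ≤ softmax z c := by
  have hpos : 0 < ∑ j, Real.exp (z j) :=
    Finset.sum_pos (fun j _ => Real.exp_pos _) ⟨y, Finset.mem_univ y⟩
  exact div_nonneg (Real.exp_pos _).le hpos.le

lemma softmax_sum_eq_one {k : ℕ} (z : Fin k → ℝ) (y : Fin k) : ∑ c, softmax z c = 1 := by
  have hpos : 0 < ∑ j, Real.exp (z j) :=
    Finset.sum_pos (fun j _ => Real.exp_pos _) ⟨y, Finset.mem_univ y⟩
  simp [softmax, ← Finset.sum_div, div_self hpos.ne']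

lemma softmax_le_one' {k : ℕ} (z : Fin k → ℝ) (y : Fin k) : softmax z y ≤ 1 := by
  calc softmax z y ≤ ∑ c, softmax z c :=
        Finset.single_le_sum (fun c _ => softmax_nonneg' z y c) (Finset.mem_univ y)
    _ = 1 := softmax_sum_eq_one z y

lemma sum_abs_softmax {k : ℕ} (z : Fin k → ℝ) (y : Fin k) :
    ∑ c, |softmax z c - (if c = y then 1 else 0)| = 2 * (1 - softmax z y) := by
  have hnn : ∀ c, 0 ≤ softmax z c := softmax_nonneg' z y
  have hsum : ∑ c, softmax z c = 1 := softmax_sum_eq_one z y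
  have hle : softmax z y ≤ 1 := softmax_le_one' z y
  have hadd := Finset.sum_erase_add Finset.univ (softmax z) (Finset.mem_univ y)
  have h1 : ∑ c ∈ Finset.univ.erase y, softmax z c = 1 - softmax z y := by
    rw [hsum] at hadd; linarith
  rw [← Finset.sum_erase_add _ _ (Finset.mem_univ y)]
  have h2 : ∑ c ∈ Finset.univ.erase y, |softmax z c - (if c = y then 1 else 0)|
      = ∑ c ∈ Finset.univ.erase y, softmax z c := by
    refine Finset.sum_congr rfl fun c hc => ?_
    rw [if_neg (Finset.ne_of_mem_erase hc), sub_zero, abs_of_nonneg (hnn c)]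
  rw [h2, h1, if_pos rfl, abs_of_nonpos (by linarith)]
  ring

/-- mini-batch gradient noise bound
`‖(1/b) ∑_{i∈B} gᵢ(W) − D(W)‖₁ ≤ 2(m−1)R·G(W)`. -/
theorem minibatch_noise_bound (n k d : ℕ) (hn : 1 ≤ n) (hk : 2 ≤ k) (hd : 1 ≤ d)
    (x : Fin n → Fin d → ℝ) (y : Fin n → Fin k)
    (R : ℝ) (hR : 0 < R) (hx : ∀ i, norm1V (x i) ≤ R)
    (m b : ℕ) (hm : 1 ≤ m) (hb : 1 ≤ b) (hnb : n = m * b)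
    (B : Finset (Fin n)) (hB : B.card = b)
    (W : Fin k → Fin d → ℝ) :
    norm1M (batchGrad x y B b W - gradCE x y W)
      ≤ 2 * ((m : ℝ) - 1) * R * proxyG x y W := by
  have hnpos : (0:ℝ) < n := by exact_mod_cast hn
  have hbpos : (0:ℝ) < b := by exact_mod_cast hb
  have hmpos : (0:ℝ) < m := by exact_mod_cast hm
  have hm1 : (0:ℝ) ≤ (m:ℝ) - 1 := by
    have : (1:ℝ) ≤ m := by exact_mod_cast hm
    linarith
  have hSnn : ∀ i : Fin n, 0 ≤ 1 - softmax (logits W (x i)) (y i) := fun i => by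
    have := softmax_le_one' (logits W (x i)) (y i); linarith
  set a : Fin n → ℝ := fun i => ∑ c, ∑ j, |sampleGrad (x i) (y i) W c j| with hadef
  have haval : ∀ i, a i = 2 * (1 - softmax (logits W (x i)) (y i)) * norm1V (x i) := by
    intro i
    calc a i = ∑ c, |softmax (logits W (x i)) c - (if c = y i then 1 else 0)| * norm1V (x i) := by
          simp [hadef, sampleGrad, abs_mul, norm1V, Finset.mul_sum]
      _ = (∑ c, |softmax (logits W (x i)) c - (if c = y i then 1 else 0)|) * norm1V (x i) := by
          rw [Finset.sum_mul]
      _ = 2 * (1 - softmax (logits W (x i)) (y i)) * norm1V (x i) := by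
          rw [sum_abs_softmax]
  have habd : ∀ i, a i ≤ 2 * (1 - softmax (logits W (x i)) (y i)) * R := by
    intro i
    rw [haval i]
    have h1 := hSnn i
    have h2 := hx i
    nlinarith
  have hanng : ∀ i, 0 ≤ a i := fun i =>
    Finset.sum_nonneg fun c _ => Finset.sum_nonneg fun j _ => abs_nonneg _
  have hneq : (n:ℝ) = (m:ℝ) * b := by exact_mod_cast hnb
  have hinvb : (1:ℝ)/b = (m:ℝ)/n := by
    rw [hneq]; field_simp
  have hdecomp : ∀ (c : Fin k) (j : Fin d), (batchGrad x y B b W - gradCE x y W) c j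
      = (1/(n:ℝ)) * (((m:ℝ)-1) * ∑ i ∈ B, sampleGrad (x i) (y i) W c j
          - ∑ i ∈ Bᶜ, sampleGrad (x i) (y i) W c j) := by
    intro c j
    have hsplit : ∑ i, sampleGrad (x i) (y i) W c j
        = ∑ i ∈ B, sampleGrad (x i) (y i) W c j + ∑ i ∈ Bᶜ, sampleGrad (x i) (y i) W c j :=
      (Finset.sum_add_sum_compl B _).symm
    simp only [Pi.sub_apply, batchGrad, gradCE]
    rw [hinvb, hsplit]
    field_simp
    ring
  have hpt : ∀ (c : Fin k) (j : Fin d), |(batchGrad x y B b W - gradCE x y W) c j|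
      ≤ (1/(n:ℝ)) * (((m:ℝ)-1) * ∑ i ∈ B, |sampleGrad (x i) (y i) W c j|
          + ∑ i ∈ Bᶜ, |sampleGrad (x i) (y i) W c j|) := by
    intro c j
    rw [hdecomp c j, abs_mul, abs_of_nonneg (by positivity : (0:ℝ) ≤ 1/(n:ℝ))]
    refine mul_le_mul_of_nonneg_left ?_ (by positivity)
    have h1 : |∑ i ∈ B, sampleGrad (x i) (y i) W c j|
        ≤ ∑ i ∈ B, |sampleGrad (x i) (y i) W c j| := Finset.abs_sum_le_sum_abs _ _
    have h2 : |∑ i ∈ Bᶜ, sampleGrad (x i) (y i) W c j|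
        ≤ ∑ i ∈ Bᶜ, |sampleGrad (x i) (y i) W c j| := Finset.abs_sum_le_sum_abs _ _
    calc |((m:ℝ)-1) * ∑ i ∈ B, sampleGrad (x i) (y i) W c j
            - ∑ i ∈ Bᶜ, sampleGrad (x i) (y i) W c j|
        ≤ |((m:ℝ)-1) * ∑ i ∈ B, sampleGrad (x i) (y i) W c j|
            + |∑ i ∈ Bᶜ, sampleGrad (x i) (y i) W c j| := abs_sub _ _
      _ ≤ ((m:ℝ)-1) * ∑ i ∈ B, |sampleGrad (x i) (y i) W c j|
            + ∑ i ∈ Bᶜ, |sampleGrad (x i) (y i) W c j| := by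
          rw [abs_mul, abs_of_nonneg hm1]
          exact add_le_add (mul_le_mul_of_nonneg_left h1 hm1) h2
  have hswap : ∀ T : Finset (Fin n),
      ∑ c : Fin k, ∑ j : Fin d, ∑ i ∈ T, |sampleGrad (x i) (y i) W c j| = ∑ i ∈ T, a i := by
    intro T
    calc ∑ c : Fin k, ∑ j : Fin d, ∑ i ∈ T, |sampleGrad (x i) (y i) W c j|
        = ∑ c : Fin k, ∑ i ∈ T, ∑ j : Fin d, |sampleGrad (x i) (y i) W c j| :=
          Finset.sum_congr rfl fun c _ => Finset.sum_comm
      _ = ∑ i ∈ T, ∑ c : Fin k, ∑ j : Fin d, |sampleGrad (x i) (y i) W c j| :=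
          Finset.sum_comm
      _ = ∑ i ∈ T, a i := rfl
  have hmain : norm1M (batchGrad x y B b W - gradCE x y W)
      ≤ (1/(n:ℝ)) * (((m:ℝ)-1) * ∑ i ∈ B, a i + ∑ i ∈ Bᶜ, a i) := by
    unfold norm1M
    calc ∑ c, ∑ j, |(batchGrad x y B b W - gradCE x y W) c j|
        ≤ ∑ c : Fin k, ∑ j : Fin d, (1/(n:ℝ)) * (((m:ℝ)-1) * ∑ i ∈ B, |sampleGrad (x i) (y i) W c j|
            + ∑ i ∈ Bᶜ, |sampleGrad (x i) (y i) W c j|) :=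
          Finset.sum_le_sum fun c _ => Finset.sum_le_sum fun j _ => hpt c j
      _ = (1/(n:ℝ)) * (((m:ℝ)-1) * ∑ i ∈ B, a i + ∑ i ∈ Bᶜ, a i) := by
          rw [← hswap B, ← hswap Bᶜ]
          simp only [← Finset.mul_sum, Finset.sum_add_distrib]
    -- done
  have hcomplB : ∑ i ∈ Bᶜ, a i ≤ ((m:ℝ)-1) * ∑ i ∈ Bᶜ, a i := by
    rcases Nat.lt_or_ge m 2 with h | h
    · have hm1' : m = 1 := by omega
      have hBu : B = Finset.univ := Finset.eq_univ_of_card B (by simp [hB, hnb, hm1'])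
      simp [hBu]
    · have h2 : (1:ℝ) ≤ (m:ℝ) - 1 := by
        have : (2:ℝ) ≤ m := by exact_mod_cast h
        linarith
      have hnnc : 0 ≤ ∑ i ∈ Bᶜ, a i := Finset.sum_nonneg fun i _ => hanng i
      nlinarith
  have hstep : ((m:ℝ)-1) * ∑ i ∈ B, a i + ∑ i ∈ Bᶜ, a i ≤ ((m:ℝ)-1) * ∑ i, a i := by
    rw [← Finset.sum_add_sum_compl B a]
    nlinarith [hcomplB]
  calc norm1M (batchGrad x y B b W - gradCE x y W)
      ≤ (1/(n:ℝ)) * (((m:ℝ)-1) * ∑ i ∈ B, a i + ∑ i ∈ Bᶜ, a i) := hmain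
    _ ≤ (1/(n:ℝ)) * (((m:ℝ)-1) * ∑ i, a i) :=
        mul_le_mul_of_nonneg_left hstep (by positivity)
    _ ≤ (1/(n:ℝ)) * (((m:ℝ)-1) * ∑ i, 2 * (1 - softmax (logits W (x i)) (y i)) * R) := by
        refine mul_le_mul_of_nonneg_left ?_ (by positivity)
        exact mul_le_mul_of_nonneg_left (Finset.sum_le_sum fun i _ => habd i) hm1
    _ = 2 * ((m:ℝ)-1) * R * proxyG x y W := by
        unfold proxyG
        rw [show (∑ i, 2 * (1 - softmax (logits W (x i)) (y i)) * R)
            = 2 * R * ∑ i, (1 - softmax (logits W (x i)) (y i)) from by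
          rw [Finset.mul_sum]; exact Finset.sum_congr rfl fun i _ => by ring]
        ring
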